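/- arXiv:1402.6724 — 4 statements merged into one kernel-verified Lean document; each statement's English description precedes it below -/
import Mathlib

section
/- Let x₁, …, xₙ be points of a set E, let r : E → (0, ∞), let λ > 0 and v* ∈ (0, λ), and let U₁, …, Uₙ be independent random variables uniformly distributed on [0, λ]. For each i, on {Uᵢ > v*} define τᵢ by e^{−r(xᵢ) τᵢ} = (λ − Uᵢ)/(λ − v*), and on {Uᵢ < v*} define τᵢ by e^{−r(xᵢ) τᵢ} = Uᵢ / v*. Then the τᵢ are independent, τᵢ is exponentially distributed with rate r(xᵢ), almost surely there is a unique index attaining min_i τᵢ, and for each j, P(τⱼ = min_i τᵢ) = r(xⱼ) / Σᵢ r(xᵢ). -/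
open MeasureTheory ProbabilityTheory

lemma prob_eq_one_of_ae_mem {Ω : Type*} [MeasurableSpace Ω] {P : Measure Ω}
    [IsProbabilityMeasure P] {s : Set Ω} (h : ∀ᵐ ω ∂P, ω ∈ s) : P s = 1 := by
  have hc : P sᶜ = 0 := by rwa [MeasureTheory.ae_iff] at h
  refine le_antisymm prob_le_one ?_
  calc (1 : ENNReal) = P Set.univ := measure_univ.symm
    _ ≤ P s + P sᶜ := by
        rw [← Set.union_compl_self s]; exact measure_union_le _ _
    _ = P s := by rw [hc, add_zero]

/-- In the lookdown construction of discrete birth events with types `x i`, parental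
rates `r (x i) > 0`, and i.i.d. uniform levels `U i` on `[0, λ]`, the auxiliary
variables `τ i` (defined by `e^{−r(xᵢ)τᵢ} = (λ − Uᵢ)/(λ − v*)` if `Uᵢ > v*` and by
`e^{−r(xᵢ)τᵢ} = Uᵢ/v*` if `Uᵢ < v*`) are independent and exponential with rates
`r (x i)`, almost surely a unique index attains the minimum, and the probability that
index `j` attains the minimum is `r (x j) / ∑ i, r (x i)`. -/
theorem discrete_birth_parent_selection
    {Ω : Type*} [MeasurableSpace Ω] (P : Measure Ω) [IsProbabilityMeasure P]
    {E : Type*} (n : ℕ) (hn : 0 < n) (x : Fin n → E) (r : E → ℝ)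
    (hr : ∀ i, 0 < r (x i))
    (lam v : ℝ) (hlam : 0 < lam) (hv : 0 < v) (hvlam : v < lam)
    (U : Fin n → Ω → ℝ) (hUmeas : ∀ i, Measurable (U i))
    (hUindep : iIndepFun U P)
    (hUunif : ∀ i, MeasureTheory.pdf.IsUniform (U i) (Set.Icc 0 lam) P)
    (τ : Fin n → Ω → ℝ) (hτmeas : ∀ i, Measurable (τ i))
    (hτ_above : ∀ i ω, v < U i ω →
      Real.exp (-(r (x i) * τ i ω)) = (lam - U i ω) / (lam - v))
    (hτ_below : ∀ i ω, U i ω < v →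
      Real.exp (-(r (x i) * τ i ω)) = U i ω / v) :
    iIndepFun τ P ∧
    (∀ i, ∀ t : ℝ, 0 ≤ t →
      P {ω | t < τ i ω} = ENNReal.ofReal (Real.exp (-(r (x i) * t)))) ∧
    P {ω | ∃! i : Fin n, ∀ j, τ i ω ≤ τ j ω} = 1 ∧
    (∀ j : Fin n,
      P {ω | ∀ i, τ j ω ≤ τ i ω} = ENNReal.ofReal (r (x j) / ∑ i, r (x i))) := by
  classical
  have hlamv : 0 < lam - v := sub_pos.mpr hvlam
  -- basic facts about the uniform distribution
  have hvolIcc : volume (Set.Icc (0:ℝ) lam) = ENNReal.ofReal lam := by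
    rw [Real.volume_Icc, sub_zero]
  have hvol0 : volume (Set.Icc (0:ℝ) lam) ≠ 0 := by
    rw [hvolIcc]
    simp only [ne_eq, ENNReal.ofReal_eq_zero, not_le]
    exact hlam
  have hvolT : volume (Set.Icc (0:ℝ) lam) ≠ ⊤ := by
    rw [hvolIcc]; exact ENNReal.ofReal_ne_top
  have hpre : ∀ i (A : Set ℝ), MeasurableSet A →
      P (U i ⁻¹' A) = volume (Set.Icc 0 lam ∩ A) / ENNReal.ofReal lam := by
    intro i A hA
    rw [← hvolIcc]
    exact (hUunif i).measure_preimage hvol0 hvolT hA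
  have hU_ae : ∀ i, ∀ᵐ ω ∂P, U i ω ∈ Set.Icc 0 lam ∧ U i ω ≠ v := by
    intro i
    have h1 : P (U i ⁻¹' (Set.Icc 0 lam)ᶜ) = 0 := by
      rw [hpre i _ measurableSet_Icc.compl, Set.inter_compl_self]
      simp
    have h2 : P (U i ⁻¹' {v}) = 0 := by
      rw [hpre i _ (measurableSet_singleton v)]
      have : volume (Set.Icc 0 lam ∩ {v}) = 0 :=
        measure_mono_null Set.inter_subset_right Real.volume_singleton
      rw [this, ENNReal.zero_div]
    have h1' : ∀ᵐ ω ∂P, U i ω ∈ Set.Icc 0 lam := by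
      rw [MeasureTheory.ae_iff]
      convert h1 using 2
      rfl
    have h2' : ∀ᵐ ω ∂P, U i ω ≠ v := by
      rw [MeasureTheory.ae_iff]
      convert h2 using 2
      ext ω; simp
    filter_upwards [h1', h2'] with ω ha hb using ⟨ha, hb⟩
  -- the key pointwise characterization of the event {t < τ i}
  have hiff : ∀ i (t : ℝ), 0 ≤ t → ∀ ω, U i ω ∈ Set.Icc 0 lam → U i ω ≠ v →
      (t < τ i ω ↔ U i ω ∈
        Set.Ioo (lam - (lam - v) * Real.exp (-(r (x i) * t))) lam ∪
        Set.Ioo 0 (v * Real.exp (-(r (x i) * t)))) := by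
    intro i t ht ω hIcc hne
    set c := Real.exp (-(r (x i) * t)) with hc
    have hcpos : 0 < c := Real.exp_pos _
    have hc1 : c ≤ 1 := Real.exp_le_one_iff.mpr (by nlinarith [hr i])
    have hexp_iff : t < τ i ω ↔ Real.exp (-(r (x i) * τ i ω)) < c := by
      rw [hc, Real.exp_lt_exp]
      constructor
      · intro h; nlinarith [hr i]
      · intro h; nlinarith [hr i]
    rcases hne.lt_or_gt with hu | hu
    · -- U i ω < v
      have hE := hτ_below i ω hu
      have hupos : 0 < U i ω := by
        have := Real.exp_pos (-(r (x i) * τ i ω))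
        rw [hE] at this
        exact (div_pos_iff.mp this).resolve_right (fun h => absurd hv (not_lt.mpr h.2.le)) |>.1
      constructor
      · intro hlt
        right
        refine ⟨hupos, ?_⟩
        have h3 : U i ω / v < c := by rw [← hE]; exact hexp_iff.mp hlt
        calc U i ω = U i ω / v * v := by field_simp
          _ < c * v := by exact mul_lt_mul_of_pos_right h3 hv
          _ = v * c := mul_comm _ _
      · rintro (h1 | h2)
        · exfalso; nlinarith [h1.1]
        · apply hexp_iff.mpr
          rw [hE, div_lt_iff₀ hv]
          nlinarith [h2.2]
    · -- v < U i ω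
      have hE := hτ_above i ω hu
      have hult : U i ω < lam := by
        have := Real.exp_pos (-(r (x i) * τ i ω))
        rw [hE] at this
        have := (div_pos_iff.mp this).resolve_right
          (fun h => absurd hlamv (not_lt.mpr h.2.le)) |>.1
        linarith
      constructor
      · intro hlt
        left
        refine ⟨?_, hult⟩
        have h3 : (lam - U i ω) / (lam - v) < c := by rw [← hE]; exact hexp_iff.mp hlt
        rw [div_lt_iff₀ hlamv] at h3
        nlinarith
      · rintro (h1 | h2)
        · apply hexp_iff.mpr
          rw [hE, div_lt_iff₀ hlamv]
          nlinarith [h1.1]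
        · exfalso; nlinarith [h2.2]
  -- Part 2: the exponential tail
  have htail : ∀ i, ∀ t : ℝ, 0 ≤ t →
      P {ω | t < τ i ω} = ENNReal.ofReal (Real.exp (-(r (x i) * t))) := by
    intro i t ht
    set c := Real.exp (-(r (x i) * t)) with hc
    have hcpos : 0 < c := Real.exp_pos _
    have hc1 : c ≤ 1 := Real.exp_le_one_iff.mpr (by nlinarith [hr i])
    set S : Set ℝ := Set.Ioo (lam - (lam - v) * c) lam ∪ Set.Ioo 0 (v * c) with hS
    have hSm : MeasurableSet S := measurableSet_Ioo.union measurableSet_Ioo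
    have hcongr : {ω | t < τ i ω} =ᵐ[P] U i ⁻¹' S := by
      rw [Filter.eventuallyEq_set]
      filter_upwards [hU_ae i] with ω hω
      exact hiff i t ht ω hω.1 hω.2
    rw [measure_congr hcongr, hpre i S hSm]
    have hsub : S ⊆ Set.Icc 0 lam := by
      rintro a (h1 | h2)
      · constructor
        · nlinarith [h1.1]
        · exact h1.2.le
      · constructor
        · exact h2.1.le
        · nlinarith [h2.2]
    rw [Set.inter_eq_self_of_subset_right hsub]
    have hdisj : Disjoint (Set.Ioo (lam - (lam - v) * c) lam) (Set.Ioo 0 (v * c)) := by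
      rw [Set.disjoint_left]
      rintro a ⟨h1, _⟩ ⟨_, h4⟩
      nlinarith
    rw [hS, measure_union hdisj measurableSet_Ioo, Real.volume_Ioo, Real.volume_Ioo, sub_zero,
      ← ENNReal.ofReal_add (by nlinarith) (by positivity),
      show lam - (lam - (lam - v) * c) + v * c = lam * c by ring,
      ← ENNReal.ofReal_div_of_pos hlam, mul_comm, mul_div_assoc, div_self hlam.ne', mul_one]
  -- the explicit a.e. representation τ i = g i ∘ U i
  set g : Fin n → ℝ → ℝ := fun i u =>
    if v < u then -Real.log ((lam - u) / (lam - v)) / r (x i)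
    else -Real.log (u / v) / r (x i) with hgdef
  have hgmeas : ∀ i, Measurable (g i) := by
    intro i
    refine Measurable.ite (measurableSet_lt measurable_const measurable_id) ?_ ?_
    · exact ((Real.measurable_log.comp
        ((measurable_const.sub measurable_id).div_const _)).neg).div_const _
    · exact ((Real.measurable_log.comp (measurable_id.div_const _)).neg).div_const _
  have hae : ∀ᵐ ω ∂P, ∀ i, τ i ω = g i (U i ω) := by
    rw [MeasureTheory.ae_all_iff]
    intro i
    filter_upwards [hU_ae i] with ω hω
    rcases hω.2.lt_or_gt with hu | hu
    · have hE := hτ_below i ω hu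
      have hlog : Real.log (U i ω / v) = -(r (x i) * τ i ω) := by
        rw [← hE, Real.log_exp]
      simp only [hgdef, if_neg (not_lt.mpr hu.le)]
      rw [hlog, neg_neg, mul_div_cancel_left₀ _ (hr i).ne']
    · have hE := hτ_above i ω hu
      have hlog : Real.log ((lam - U i ω) / (lam - v)) = -(r (x i) * τ i ω) := by
        rw [← hE, Real.log_exp]
      simp only [hgdef, if_pos hu]
      rw [hlog, neg_neg, mul_div_cancel_left₀ _ (hr i).ne']
  -- Part 1: independence
  have hind : iIndepFun τ P := by
    have hcompind : iIndepFun (fun i => g i ∘ U i) P :=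
      hUindep.comp g hgmeas
    rw [ProbabilityTheory.iIndepFun_iff_measure_inter_preimage_eq_mul] at hcompind ⊢
    intro S sets hsets
    have h1 : P (⋂ i ∈ S, τ i ⁻¹' sets i) = P (⋂ i ∈ S, (g i ∘ U i) ⁻¹' sets i) := by
      apply measure_congr
      rw [Filter.eventuallyEq_set]
      filter_upwards [hae] with ω hω
      simp only [Set.mem_iInter, Set.mem_preimage, Function.comp_apply]
      exact forall_congr' fun i => forall_congr' fun _ => by rw [hω i]
    have h2 : ∀ i ∈ S, P (τ i ⁻¹' sets i) = P ((g i ∘ U i) ⁻¹' sets i) := by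
      intro i _
      apply measure_congr
      rw [Filter.eventuallyEq_set]
      filter_upwards [hae] with ω hω
      simp only [Set.mem_preimage, Function.comp_apply, hω i]
    rw [h1, hcompind S hsets]
    exact (Finset.prod_congr rfl h2).symm
  -- positivity of τ almost surely
  have hpos : ∀ i, ∀ᵐ ω ∂P, 0 < τ i ω := by
    intro i
    have h1 : P {ω | 0 < τ i ω} = 1 := by
      rw [htail i 0 le_rfl]; simp
    have hms : MeasurableSet {ω | 0 < τ i ω} := measurableSet_lt measurable_const (hτmeas i)
    have h2 := measure_compl hms (measure_ne_top P _)
    rw [h1, measure_univ, tsub_self, Set.compl_setOf] at h2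
    rw [MeasureTheory.ae_iff]
    simpa using h2
  -- identification of the law of τ i with the exponential measure
  have hmap : ∀ i, Measure.map (τ i) P = ProbabilityTheory.expMeasure (r (x i)) := by
    intro i
    haveI hprob : IsProbabilityMeasure (Measure.map (τ i) P) :=
      MeasureTheory.Measure.isProbabilityMeasure_map (hτmeas i).aemeasurable
    haveI hprob2 : IsProbabilityMeasure (expMeasure (r (x i))) :=
      isProbabilityMeasure_expMeasure (hr i)
    refine MeasureTheory.Measure.ext_of_Iic _ _ (fun a => ?_)
    rw [Measure.map_apply (hτmeas i) measurableSet_Iic,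
      ← ProbabilityTheory.ofReal_cdf _ a]
    rw [cdf_expMeasure_eq (hr i)]
    by_cases ha : 0 ≤ a
    · rw [if_pos ha]
      have hcompl : τ i ⁻¹' Set.Iic a = {ω | a < τ i ω}ᶜ := by
        ext ω; simp [not_lt]
      rw [hcompl, measure_compl (measurableSet_lt measurable_const (hτmeas i))
        (measure_ne_top _ _), htail i a ha, measure_univ,
        ← ENNReal.ofReal_one, ← ENNReal.ofReal_sub _ (Real.exp_nonneg _)]
    · rw [if_neg ha]
      push_neg at ha
      rw [ENNReal.ofReal_zero]
      refine measure_mono_null (fun ω h => ?_) ((MeasureTheory.ae_iff).mp (hpos i))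
      simp only [Set.mem_preimage, Set.mem_Iic] at h
      simp only [Set.mem_setOf_eq, not_lt]
      linarith
  -- atoms of τ i are null
  have hatom : ∀ i (t : ℝ), P (τ i ⁻¹' {t}) = 0 := by
    intro i t
    rw [← Measure.map_apply (hτmeas i) (measurableSet_singleton t), hmap i]
    have hrepr : ProbabilityTheory.expMeasure (r (x i))
        = volume.withDensity (ProbabilityTheory.gammaPDF 1 (r (x i))) := rfl
    rw [hrepr]
    exact MeasureTheory.withDensity_absolutelyContinuous volume _ Real.volume_singleton
  -- ties are null
  have htie : ∀ i j : Fin n, i ≠ j → P {ω | τ i ω = τ j ω} = 0 := by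
    intro i j hij
    have hIF : IndepFun (τ i) (τ j) P := hind.indepFun hij
    rw [ProbabilityTheory.indepFun_iff_map_prod_eq_prod_map_map (hτmeas i).aemeasurable
      (hτmeas j).aemeasurable] at hIF
    have hD : MeasurableSet {p : ℝ × ℝ | p.1 = p.2} :=
      measurableSet_eq_fun measurable_fst measurable_snd
    have hED : {ω | τ i ω = τ j ω} = (fun ω => (τ i ω, τ j ω)) ⁻¹' {p | p.1 = p.2} := rfl
    rw [hED, ← Measure.map_apply ((hτmeas i).prodMk (hτmeas j)) hD, hIF,
      Measure.prod_apply hD]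
    have hz : ∀ a : ℝ, (Measure.map (τ j) P) (Prod.mk a ⁻¹' {p : ℝ × ℝ | p.1 = p.2}) = 0 := by
      intro a
      have : Prod.mk a ⁻¹' {p : ℝ × ℝ | p.1 = p.2} = {a} := by
        ext b; simp [eq_comm]
      rw [this, Measure.map_apply (hτmeas j) (measurableSet_singleton a)]
      exact hatom j a
    simp only [hz, lintegral_zero]
  -- Part 3
  have hdistinct : ∀ᵐ ω ∂P, ∀ i j : Fin n, i ≠ j → τ i ω ≠ τ j ω := by
    rw [MeasureTheory.ae_all_iff]
    intro i
    rw [MeasureTheory.ae_all_iff]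
    intro j
    by_cases hij : i = j
    · subst hij
      exact Filter.Eventually.of_forall fun ω h => absurd rfl h
    · rw [MeasureTheory.ae_iff]
      refine measure_mono_null (fun ω h => ?_) (htie i j hij)
      simp only [Set.mem_setOf_eq, Classical.not_imp, not_not] at h
      exact h.2
  have hpart3 : P {ω | ∃! i : Fin n, ∀ j, τ i ω ≤ τ j ω} = 1 := by
    apply prob_eq_one_of_ae_mem
    filter_upwards [hdistinct] with ω hω
    obtain ⟨i, -, hi⟩ := Finset.exists_min_image Finset.univ (fun i => τ i ω)
      ⟨⟨0, hn⟩, Finset.mem_univ _⟩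
    refine ⟨i, fun j => hi j (Finset.mem_univ j), ?_⟩
    intro k hk
    by_contra hki
    exact hω k i hki (le_antisymm (hk i) (hi k (Finset.mem_univ k)))
  -- Ioi and Ici probabilities for all real a
  have hIoi : ∀ i (a : ℝ), P (τ i ⁻¹' Set.Ioi a)
      = ENNReal.ofReal (Real.exp (-(r (x i) * max a 0))) := by
    intro i a
    rcases le_or_gt 0 a with ha | ha
    · rw [max_eq_left ha]
      exact htail i a ha
    · rw [max_eq_right ha.le]
      simp only [mul_zero, neg_zero, Real.exp_zero, ENNReal.ofReal_one]
      refine le_antisymm prob_le_one ?_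
      have h0 : P {ω | 0 < τ i ω} = 1 := by rw [htail i 0 le_rfl]; simp
      rw [← h0]
      exact measure_mono fun ω h => lt_trans ha h
  have hIci : ∀ i (a : ℝ), P (τ i ⁻¹' Set.Ici a)
      = ENNReal.ofReal (Real.exp (-(r (x i) * max a 0))) := by
    intro i a
    rw [← hIoi i a]
    apply measure_congr
    rw [Filter.eventuallyEq_set]
    have hane : ∀ᵐ ω ∂P, τ i ω ≠ a := by
      rw [MeasureTheory.ae_iff]
      refine measure_mono_null (fun ω h => ?_) (hatom i a)
      simpa using h
    filter_upwards [hane] with ω hω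
    simp only [Set.mem_preimage, Set.mem_Ici, Set.mem_Ioi]
    exact ⟨fun h => lt_of_le_of_ne h (Ne.symm hω), fun h => h.le⟩
  -- Part 4
  have hpart4 : ∀ j : Fin n,
      P {ω | ∀ i, τ j ω ≤ τ i ω} = ENNReal.ofReal (r (x j) / ∑ i, r (x i)) := by
    intro j
    by_cases hT : (Finset.univ.erase j).Nonempty
    · set T := Finset.univ.erase j with hTdef
      set b := ∑ i ∈ T, r (x i) with hb
      have hbpos : 0 < b := Finset.sum_pos (fun i _ => hr i) hT
      set s := r (x j) + b with hs
      have hspos : 0 < s := add_pos (hr j) hbpos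
      have hssum : s = ∑ i, r (x i) := by
        rw [hs, hb, hTdef]
        exact Finset.add_sum_erase Finset.univ (fun i => r (x i)) (Finset.mem_univ j)
      have hFcalc : ∀ a : ℝ, P (⋂ i ∈ T, τ i ⁻¹' Set.Ici a)
          = ENNReal.ofReal (Real.exp (-(b * max a 0))) := by
        intro a
        have h := hind.measure_inter_preimage_eq_mul (sets := fun _ => Set.Ici a) T
          (fun i _ => measurableSet_Ici)
        rw [h, Finset.prod_congr rfl (fun i _ => hIci i a),
          ← ENNReal.ofReal_prod_of_nonneg (fun i _ => Real.exp_nonneg _),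
          ← Real.exp_sum]
        congr 2
        rw [Finset.sum_neg_distrib, hb, Finset.sum_mul]
      set W : Ω → ({ i : Fin n // i ∈ T } → ℝ) := fun ω i => τ i.1 ω with hW
      have hWmeas : Measurable W := measurable_pi_lambda _ fun i => hτmeas i.1
      have hIF : IndepFun (τ j) W P := by
        have h1 := hind.indepFun_finset {j} T
          (Finset.disjoint_singleton_left.mpr (Finset.notMem_erase j _)) hτmeas
        exact h1.comp (φ := fun y : ({ i : Fin n // i ∈ ({j} : Finset (Fin n)) } → ℝ) =>
          y ⟨j, Finset.mem_singleton_self j⟩) (ψ := id) (measurable_pi_apply _) measurable_id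
      rw [ProbabilityTheory.indepFun_iff_map_prod_eq_prod_map_map (hτmeas j).aemeasurable
        hWmeas.aemeasurable] at hIF
      set D : Set (ℝ × ({ i : Fin n // i ∈ T } → ℝ)) := {p | ∀ i, p.1 ≤ p.2 i} with hD
      have hDm : MeasurableSet D := by
        have hDeq : D = ⋂ i, {p : ℝ × ({ i : Fin n // i ∈ T } → ℝ) | p.1 ≤ p.2 i} := by
          ext p; simp [hD]
        rw [hDeq]
        exact MeasurableSet.iInter fun i =>
          measurableSet_le measurable_fst ((measurable_pi_apply i).comp measurable_snd)
      have hevent : {ω | ∀ i, τ j ω ≤ τ i ω} = (fun ω => (τ j ω, W ω)) ⁻¹' D := by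
        ext ω
        simp only [Set.mem_setOf_eq, Set.mem_preimage, hD, hW]
        constructor
        · intro h i; exact h i
        · intro h i
          by_cases hij : i = j
          · subst hij; exact le_refl _
          · exact h ⟨i, Finset.mem_erase.mpr ⟨hij, Finset.mem_univ i⟩⟩
      rw [hevent, ← Measure.map_apply ((hτmeas j).prodMk hWmeas) hDm, hIF,
        Measure.prod_apply hDm]
      have hslice : ∀ a : ℝ, (Measure.map W P) (Prod.mk a ⁻¹' D)
          = ENNReal.ofReal (Real.exp (-(b * max a 0))) := by
        intro a
        have hDa : MeasurableSet (Prod.mk a ⁻¹' D) := hDm.preimage measurable_prodMk_left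
        rw [Measure.map_apply hWmeas hDa]
        have hWpre : W ⁻¹' (Prod.mk a ⁻¹' D) = ⋂ i ∈ T, τ i ⁻¹' Set.Ici a := by
          ext ω
          simp only [Set.mem_preimage, hD, hW, Set.mem_setOf_eq, Set.mem_iInter, Set.mem_Ici]
          exact ⟨fun h i hi => h ⟨i, hi⟩, fun h i => h i i.2⟩
        rw [hWpre]
        exact hFcalc a
      have hGmeas : Measurable fun a : ℝ => ENNReal.ofReal (Real.exp (-(b * max a 0))) :=
        ENNReal.measurable_ofReal.comp
          ((Real.continuous_exp.comp
            (continuous_const.mul (continuous_id.max continuous_const)).neg).measurable)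
      have hpdfmeas : ∀ q : ℝ, Measurable (ProbabilityTheory.exponentialPDF q) := fun q =>
        ENNReal.measurable_ofReal.comp (measurable_exponentialPDFReal q)
      calc ∫⁻ a, (Measure.map W P) (Prod.mk a ⁻¹' D) ∂(Measure.map (τ j) P)
          = ∫⁻ a, ENNReal.ofReal (Real.exp (-(b * max a 0))) ∂(Measure.map (τ j) P) :=
            lintegral_congr hslice
        _ = ∫⁻ a, (ProbabilityTheory.exponentialPDF (r (x j))
              * fun a => ENNReal.ofReal (Real.exp (-(b * max a 0)))) a := by
            rw [hmap j]
            have hrepr : ProbabilityTheory.expMeasure (r (x j))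
                = volume.withDensity (ProbabilityTheory.exponentialPDF (r (x j))) := rfl
            rw [hrepr, lintegral_withDensity_eq_lintegral_mul volume (hpdfmeas _) hGmeas]
        _ = ∫⁻ a, ENNReal.ofReal (r (x j) / s) * ProbabilityTheory.exponentialPDF s a := by
            apply lintegral_congr
            intro a
            rcases lt_or_ge a 0 with ha | ha
            · rw [Pi.mul_apply, ProbabilityTheory.exponentialPDF_of_neg ha,
                ProbabilityTheory.exponentialPDF_of_neg ha, zero_mul, mul_zero]
            · rw [Pi.mul_apply, ProbabilityTheory.exponentialPDF_of_nonneg ha,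
                ProbabilityTheory.exponentialPDF_of_nonneg ha, max_eq_left ha,
                ← ENNReal.ofReal_mul (mul_nonneg (hr j).le (Real.exp_nonneg _)),
                ← ENNReal.ofReal_mul (div_nonneg (hr j).le hspos.le)]
              congr 1
              have hexp : Real.exp (-(r (x j) * a)) * Real.exp (-(b * a))
                  = Real.exp (-(s * a)) := by
                rw [← Real.exp_add]
                congr 1
                rw [hs]; ring
              rw [mul_assoc, hexp]
              field_simp
        _ = ENNReal.ofReal (r (x j) / s) * 1 := by
            rw [lintegral_const_mul _ (hpdfmeas s),
              ProbabilityTheory.lintegral_exponentialPDF_eq_one hspos]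
        _ = ENNReal.ofReal (r (x j) / ∑ i, r (x i)) := by rw [mul_one, hssum]
    · have hall : ∀ i : Fin n, i = j := by
        intro i
        by_contra h
        exact hT ⟨i, Finset.mem_erase.mpr ⟨h, Finset.mem_univ i⟩⟩
      have hevent : {ω | ∀ i, τ j ω ≤ τ i ω} = Set.univ := by
        ext ω
        simp only [Set.mem_setOf_eq, Set.mem_univ, iff_true]
        intro i
        rw [hall i]
      have huniv : (Finset.univ : Finset (Fin n)) = {j} := by
        ext i; simp [hall i]
      rw [hevent, measure_univ, huniv, Finset.sum_singleton, div_self (hr j).ne',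
        ENNReal.ofReal_one]
  exact ⟨hind, htail, hpart3, hpart4⟩
end

section
/- Let λ > 0, let k be a positive integer, define G_k^λ(u) = λ^{−k}(λ − u)^{k+1} − (λ − u), and let g : [0, λ] → ℝ be continuously differentiable. Then λ^{−1} ∫₀^λ [ g(u) · ((k+1)/λ^k) ( (∫_u^λ g(v) dv)^k − (λ − u)^k ) + G_k^λ(u) g′(u) ] du = ḡ^{k+1} − ḡ, where ḡ = λ^{−1} ∫₀^λ g(u) du. -/
open MeasureTheory intervalIntegral

/-- The full averaging computation for the continuous-birth generator: with
`G_k^λ(u) = λ^{−k}(λ−u)^{k+1} − (λ−u)` and `ḡ = λ⁻¹ ∫₀^λ g`,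
`λ⁻¹ ∫₀^λ [ g(u) ((k+1)/λ^k) ((∫_u^λ g)^k − (λ−u)^k) + G_k^λ(u) g'(u) ] du
  = ḡ^{k+1} − ḡ`. -/
theorem continuous_birth_full_averaging
    (lam : ℝ) (hlam : 0 < lam) (k : ℕ) (hk : 0 < k) (g g' : ℝ → ℝ)
    (hderiv : ∀ u ∈ Set.Icc 0 lam, HasDerivAt g (g' u) u)
    (hcont : ContinuousOn g' (Set.Icc 0 lam)) :
    lam⁻¹ * ∫ u in (0:ℝ)..lam,
        (g u * ((k + 1 : ℝ) / lam ^ k) * ((∫ v in u..lam, g v) ^ k - (lam - u) ^ k)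
          + ((lam - u) ^ (k + 1) / lam ^ k - (lam - u)) * g' u)
      = (lam⁻¹ * ∫ u in (0:ℝ)..lam, g u) ^ (k + 1)
        - lam⁻¹ * ∫ u in (0:ℝ)..lam, g u := by
  have hle : (0:ℝ) ≤ lam := hlam.le
  have hlamne : lam ≠ 0 := hlam.ne'
  -- clamp to [0, lam]
  set p : ℝ → ℝ := fun x => max 0 (min x lam) with hp
  have hpcont : Continuous p := continuous_const.max (continuous_id.min continuous_const)
  have hpmem : ∀ x, p x ∈ Set.Icc 0 lam :=
    fun x => ⟨le_max_left _ _, max_le hle (min_le_right _ _)⟩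
  have hpeq : ∀ x ∈ Set.Icc 0 lam, p x = x := by
    intro x hx
    simp [hp, min_eq_left hx.2, max_eq_right hx.1]
  have hgcont : ContinuousOn g (Set.Icc 0 lam) :=
    fun x hx => (hderiv x hx).continuousAt.continuousWithinAt
  set G : ℝ → ℝ := fun x => g (p x) with hG
  have hGcont : Continuous G := hgcont.comp_continuous hpcont hpmem
  have hGeq : ∀ x ∈ Set.Icc 0 lam, G x = g x := by
    intro x hx; simp [hG, hpeq x hx]
  set H : ℝ → ℝ := fun u => ∫ v in u..lam, G v with hH
  have hHderiv : ∀ u, HasDerivAt H (-G u) u := fun u =>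
    intervalIntegral.integral_hasDerivAt_left (hGcont.intervalIntegrable _ _)
      (hGcont.stronglyMeasurable.stronglyMeasurableAtFilter) hGcont.continuousAt
  have hHcont : Continuous H := by
    rw [continuous_iff_continuousAt]; exact fun u => (hHderiv u).continuousAt
  have hHg : ∀ u ∈ Set.Icc 0 lam, (∫ v in u..lam, g v) = H u := by
    intro u hu
    apply intervalIntegral.integral_congr
    intro v hv
    rw [Set.uIcc_of_le hu.2] at hv
    exact (hGeq v ⟨le_trans hu.1 hv.1, hv.2⟩).symm
  -- the antiderivative
  set F : ℝ → ℝ := fun u =>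
    -(H u) ^ (k + 1) / lam ^ k + ((lam - u) ^ (k + 1) / lam ^ k - (lam - u)) * g u with hF
  have hmain : ∀ u ∈ Set.Icc 0 lam, HasDerivAt F
      ((g u * ((k + 1 : ℝ) / lam ^ k) * ((∫ v in u..lam, g v) ^ k - (lam - u) ^ k)
        + ((lam - u) ^ (k + 1) / lam ^ k - (lam - u)) * g' u) + g u) u := by
    intro u hu
    have h1 := (((hHderiv u).pow (k + 1)).neg).div_const (lam ^ k)
    have h2 : HasDerivAt (fun x : ℝ => lam - x) (-1) u := by
      simpa using (hasDerivAt_id u).const_sub lam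
    have h3 := ((h2.pow (k + 1)).div_const (lam ^ k)).sub h2
    have h4 := h3.mul (hderiv u hu)
    have h5 := h1.add h4
    refine h5.congr_deriv ?_
    rw [hHg u hu, hGeq u hu]
    simp only [Nat.add_sub_cancel, Pi.sub_apply, Pi.pow_apply]
    push_cast
    ring
  -- integrability of the derivative expression
  have hIcc : Set.uIcc (0:ℝ) lam = Set.Icc 0 lam := Set.uIcc_of_le hle
  have hgint : ContinuousOn (fun u => g u) (Set.Icc 0 lam) := hgcont
  have hHg' : ContinuousOn (fun u => (∫ v in u..lam, g v)) (Set.Icc 0 lam) :=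
    hHcont.continuousOn.congr hHg
  have hcontOn : ContinuousOn (fun u =>
      (g u * ((k + 1 : ℝ) / lam ^ k) * ((∫ v in u..lam, g v) ^ k - (lam - u) ^ k)
        + ((lam - u) ^ (k + 1) / lam ^ k - (lam - u)) * g' u) + g u) (Set.Icc 0 lam) := by
    apply ContinuousOn.add _ hgcont
    apply ContinuousOn.add
    · exact (hgcont.mul continuousOn_const).mul
        ((hHg'.pow k).sub ((continuousOn_const.sub continuousOn_id).pow k))
    · exact ((((continuousOn_const.sub continuousOn_id).pow (k+1)).div_const _).sub
        (continuousOn_const.sub continuousOn_id)).mul hcont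
  have hFTC := intervalIntegral.integral_eq_sub_of_hasDerivAt
    (f := F) (a := (0:ℝ)) (b := lam)
    (fun u hu => hmain u (hIcc ▸ hu))
    ((hcontOn.mono hIcc.subset).intervalIntegrable)
  -- split the integral
  have hintg : IntervalIntegrable g volume 0 lam :=
    (hgcont.mono hIcc.subset).intervalIntegrable
  have hintF' : IntervalIntegrable (fun u =>
      (g u * ((k + 1 : ℝ) / lam ^ k) * ((∫ v in u..lam, g v) ^ k - (lam - u) ^ k)
        + ((lam - u) ^ (k + 1) / lam ^ k - (lam - u)) * g' u) + g u) volume 0 lam :=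
    (hcontOn.mono hIcc.subset).intervalIntegrable
  have hsplit : (∫ u in (0:ℝ)..lam,
      (g u * ((k + 1 : ℝ) / lam ^ k) * ((∫ v in u..lam, g v) ^ k - (lam - u) ^ k)
        + ((lam - u) ^ (k + 1) / lam ^ k - (lam - u)) * g' u))
      = (F lam - F 0) - ∫ u in (0:ℝ)..lam, g u := by
    have : (∫ u in (0:ℝ)..lam,
        (g u * ((k + 1 : ℝ) / lam ^ k) * ((∫ v in u..lam, g v) ^ k - (lam - u) ^ k)
          + ((lam - u) ^ (k + 1) / lam ^ k - (lam - u)) * g' u))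
        = ∫ u in (0:ℝ)..lam,
          (((g u * ((k + 1 : ℝ) / lam ^ k) * ((∫ v in u..lam, g v) ^ k - (lam - u) ^ k)
            + ((lam - u) ^ (k + 1) / lam ^ k - (lam - u)) * g' u) + g u) - g u) := by
      congr 1; funext u; ring
    rw [this, intervalIntegral.integral_sub hintF' hintg, hFTC]
  have hFlam : F lam = 0 := by
    simp [hF, hH, intervalIntegral.integral_same, zero_pow (Nat.succ_ne_zero k)]
  have hF0 : F 0 = -(∫ u in (0:ℝ)..lam, g u) ^ (k + 1) / lam ^ k := by
    have hH0 : H 0 = ∫ u in (0:ℝ)..lam, g u := (hHg 0 ⟨le_refl 0, hle⟩).symm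
    have : lam ^ (k + 1) / lam ^ k - lam = 0 := by
      field_simp [pow_succ]
      ring
    simp [hF, hH0, this]
  rw [hsplit, hFlam, hF0]
  rw [mul_pow, inv_pow]
  field_simp
  ring
end

section
/- Let N ≥ 2, let E be a measurable space, let X = (X₁, …, X_N) be an exchangeable E-valued random vector (i.e., (X_{σ(1)}, …, X_{σ(N)}) has the same distribution as X for every permutation σ of {1, …, N}), and let (I, J) be uniformly distributed on {(i, j) : 1 ≤ i < j ≤ N}, independent of X. Define Y = (Y₁, …, Y_N) by Y_J = X_I and Y_k = X_k for k ≠ J. Then Y is exchangeable. -/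
open MeasureTheory ProbabilityTheory

namespace LookdownAux

variable {E : Type*} [MeasurableSpace E] {N : ℕ}

def L (q : Fin N × Fin N) (x : Fin N → E) : Fin N → E :=
  fun k => if k = q.2 then x q.1 else x k

lemma measurable_L (q : Fin N × Fin N) : Measurable (L (E := E) q) := by
  apply measurable_pi_lambda
  intro k
  unfold L
  by_cases h : k = q.2 <;> simp [h, measurable_pi_apply]

omit [MeasurableSpace E] in
lemma L_comp_perm (σ : Equiv.Perm (Fin N)) (q : Fin N × Fin N) (x : Fin N → E) :
    (fun i => L q x (σ i)) = L (σ⁻¹ q.1, σ⁻¹ q.2) (fun i => x (σ i)) := by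
  funext k
  simp only [L]
  by_cases h : σ k = q.2
  · have hk : k = σ⁻¹ q.2 := by simp [← h]
    simp [h, hk]
  · have hk : k ≠ σ⁻¹ q.2 := fun hk => h (by simp [hk])
    simp [h, show k ≠ σ.symm q.2 from hk]

omit [MeasurableSpace E] in
lemma L_swap (a b : Fin N) (x : Fin N → E) :
    L (a, b) (fun i => x (Equiv.swap a b i)) = L (b, a) x := by
  funext k
  simp only [L]
  by_cases h1 : k = b
  · by_cases h2 : k = a
    · subst h1; subst h2; simp
    · simp [h1, h2, Equiv.swap_apply_left]
  · by_cases h2 : k = a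
    · subst h2
      simp [h1, Equiv.swap_apply_left, Ne.symm h1]
    · simp [h1, h2, Equiv.swap_apply_of_ne_of_ne h2 h1]

end LookdownAux

/-- A single lookdown replacement event preserves exchangeability: if
`X = (X₁, …, X_N)` is exchangeable, `(I, J)` is uniform on `{(i,j) : i < j}` and
independent of `X`, and `Y` is obtained from `X` by replacing the coordinate `J`
with a copy of coordinate `I`, then `Y` is exchangeable. -/
theorem lookdown_preserves_exchangeability
    {Ω : Type*} [MeasurableSpace Ω] (P : Measure Ω) [IsProbabilityMeasure P]
    {E : Type*} [MeasurableSpace E]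
    (N : ℕ) (hN : 2 ≤ N)
    (X : Fin N → Ω → E) (hXmeas : ∀ i, Measurable (X i))
    (hXexch : ∀ σ : Equiv.Perm (Fin N),
      Measure.map (fun ω => fun i => X (σ i) ω) P
        = Measure.map (fun ω => fun i => X i ω) P)
    (IJ : Ω → Fin N × Fin N) (hIJmeas : Measurable IJ)
    (hIJsupp : P {ω | (IJ ω).1 < (IJ ω).2} = 1)
    (hIJunif : ∀ q : Fin N × Fin N, q.1 < q.2 →
      P {ω | IJ ω = q} = (N.choose 2 : ENNReal)⁻¹)
    (hindep : IndepFun (fun ω => fun i => X i ω) IJ P)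
    (Y : Ω → Fin N → E)
    (hY : ∀ ω k, Y ω k = if k = (IJ ω).2 then X (IJ ω).1 ω else X k ω) :
    ∀ σ : Equiv.Perm (Fin N),
      Measure.map (fun ω => fun i => Y ω (σ i)) P = Measure.map Y P := by
  classical
  open LookdownAux in
  intro σ
  set Xv : Ω → Fin N → E := fun ω i => X i ω with hXv
  have hXvm : Measurable Xv := measurable_pi_lambda _ hXmeas
  set μ := Measure.map Xv P with hμ
  -- permutation maps are measurable
  have hcomp : ∀ τ : Equiv.Perm (Fin N),
      Measurable fun x : Fin N → E => fun i => x (τ i) :=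
    fun τ => measurable_pi_lambda _ fun i => measurable_pi_apply _
  -- exchangeability at the level of μ
  have hexch : ∀ τ : Equiv.Perm (Fin N), μ.map (fun x => fun i => x (τ i)) = μ := by
    intro τ
    rw [hμ, Measure.map_map (hcomp τ) hXvm]
    exact hXexch τ
  set ν : Fin N × Fin N → Measure (Fin N → E) := fun q => μ.map (L q) with hν
  have hsymm : ∀ a b : Fin N, ν (a, b) = ν (b, a) := by
    intro a b
    have hL : L (E := E) (b, a)
        = (L (a, b)) ∘ (fun x => fun i => x (Equiv.swap a b i)) := by
      funext x; exact (L_swap a b x).symm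
    simp only [hν, hL]
    rw [← Measure.map_map (measurable_L _) (hcomp _), hexch]
  -- the per-permutation pushforward of L q
  have hperm : ∀ (τ : Equiv.Perm (Fin N)) (q : Fin N × Fin N),
      μ.map (fun x => fun i => L q x (τ i)) = ν (τ⁻¹ q.1, τ⁻¹ q.2) := by
    intro τ q
    have hL : (fun x : Fin N → E => fun i => L q x (τ i))
        = (L (τ⁻¹ q.1, τ⁻¹ q.2)) ∘ (fun x => fun i => x (τ i)) := by
      funext x; exact L_comp_perm τ q x
    rw [hL, ← Measure.map_map (measurable_L _) (hcomp _), hexch]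
  -- measurability of the composed maps
  have hLτ : ∀ (τ : Equiv.Perm (Fin N)) (q : Fin N × Fin N),
      Measurable fun x : Fin N → E => fun i => L q x (τ i) := by
    intro τ q
    exact (hcomp τ).comp (measurable_L q)
  set S : Finset (Fin N × Fin N) :=
    Finset.univ.filter (fun q : Fin N × Fin N => q.1 < q.2) with hS
  set c : ENNReal := (N.choose 2 : ENNReal)⁻¹ with hc
  -- Y is measurable (as a function into the product)
  have hYeq : ∀ ω, Y ω = L (IJ ω) (Xv ω) := by
    intro ω; funext k; rw [hY]; rfl
  have hLunc : Measurable fun p : (Fin N → E) × (Fin N × Fin N) => L p.2 p.1 :=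
    measurable_from_prod_countable_left fun q => measurable_L q
  have hYm : Measurable Y := by
    have : Y = (fun p : (Fin N → E) × (Fin N × Fin N) => L p.2 p.1)
        ∘ (fun ω => (Xv ω, IJ ω)) := by
      funext ω; exact hYeq ω
    rw [this]
    exact hLunc.comp (hXvm.prodMk hIJmeas)
  have hYτm : ∀ τ : Equiv.Perm (Fin N),
      Measurable fun ω => fun i => Y ω (τ i) :=
    fun τ => (hcomp τ).comp hYm
  -- the main decomposition
  have hTnull : P ((IJ ⁻¹' (S : Set (Fin N × Fin N)))ᶜ) = 0 := by
    have hTset : IJ ⁻¹' (S : Set (Fin N × Fin N)) = {ω | (IJ ω).1 < (IJ ω).2} := by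
      ext ω; simp [hS]
    have hTm : MeasurableSet (IJ ⁻¹' (S : Set (Fin N × Fin N))) :=
      hIJmeas (S.measurableSet)
    rw [measure_compl hTm (measure_ne_top _ _), hTset, hIJsupp]
    simp
  have main : ∀ (τ : Equiv.Perm (Fin N)) (A : Set (Fin N → E)), MeasurableSet A →
      P ((fun ω => fun i => Y ω (τ i)) ⁻¹' A)
        = ∑ q ∈ S, μ ((fun x => fun i => L q x (τ i)) ⁻¹' A) * c := by
    intro τ A hA
    set B : Set Ω := (fun ω => fun i => Y ω (τ i)) ⁻¹' A with hB
    have hBm : MeasurableSet B := hYτm τ hA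
    have hsplit : P B = ∑ q ∈ S, P (B ∩ IJ ⁻¹' {q}) := by
      have h1 : P B = P (B ∩ IJ ⁻¹' (S : Set (Fin N × Fin N))) :=
        (measure_inter_conull hTnull).symm
      have h2 : B ∩ IJ ⁻¹' (S : Set (Fin N × Fin N))
          = ⋃ q ∈ S, B ∩ IJ ⁻¹' {q} := by
        ext ω
        simp only [Set.mem_inter_iff, Set.mem_preimage, Finset.mem_coe,
          Set.mem_iUnion, Set.mem_singleton_iff]
        constructor
        · rintro ⟨hb, hq⟩; exact ⟨IJ ω, hq, hb, rfl⟩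
        · rintro ⟨q, hq, hb, hIJq⟩; exact ⟨hb, hIJq ▸ hq⟩
      rw [h1, h2, measure_biUnion_finset]
      · intro q hq q' hq' hne
        simp only [Function.onFun]
        apply Set.disjoint_left.2
        rintro ω ⟨-, h1⟩ ⟨-, h2⟩
        exact hne (h1.symm.trans h2 ▸ by simp_all)
      · intro q hq
        exact hBm.inter (hIJmeas (measurableSet_singleton q))
    rw [hsplit]
    refine Finset.sum_congr rfl fun q hq => ?_
    have hqlt : q.1 < q.2 := by simpa [hS] using hq
    have hBq : B ∩ IJ ⁻¹' {q}
        = Xv ⁻¹' ((fun x => fun i => L q x (τ i)) ⁻¹' A) ∩ IJ ⁻¹' {q} := by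
      ext ω
      simp only [Set.mem_inter_iff, Set.mem_preimage, Set.mem_singleton_iff, hB]
      constructor
      · rintro ⟨hb, hIJq⟩
        refine ⟨?_, hIJq⟩
        have : (fun i => Y ω (τ i)) = fun i => L q (Xv ω) (τ i) := by
          funext i; rw [hYeq ω, hIJq]
        rwa [← this]
      · rintro ⟨hb, hIJq⟩
        refine ⟨?_, hIJq⟩
        have : (fun i => Y ω (τ i)) = fun i => L q (Xv ω) (τ i) := by
          funext i; rw [hYeq ω, hIJq]
        rwa [this]
    rw [hBq, hindep.measure_inter_preimage_eq_mul _ _ (hLτ τ q hA)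
      (measurableSet_singleton q)]
    have hPq : P (IJ ⁻¹' {q}) = c := by
      have : IJ ⁻¹' {q} = {ω | IJ ω = q} := by ext ω; simp
      rw [this, hIJunif q hqlt, hc]
    rw [hPq, hμ, Measure.map_apply hXvm (hLτ τ q hA)]
  -- put things together
  refine Measure.ext fun A hA => ?_
  rw [Measure.map_apply (hYτm σ) hA, Measure.map_apply hYm hA]
  have h1 : P (Y ⁻¹' A) = ∑ q ∈ S, μ (L q ⁻¹' A) * c := by
    have := main 1 A hA
    simpa using this
  rw [main σ A hA, h1]
  -- rewrite each term on the left using hperm and hsymm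
  have hterm : ∀ q ∈ S, μ ((fun x => fun i => L q x (σ i)) ⁻¹' A) * c
      = ν (if σ⁻¹ q.1 < σ⁻¹ q.2 then (σ⁻¹ q.1, σ⁻¹ q.2) else (σ⁻¹ q.2, σ⁻¹ q.1)) A * c := by
    intro q hq
    have h2 : μ ((fun x => fun i => L q x (σ i)) ⁻¹' A) = ν (σ⁻¹ q.1, σ⁻¹ q.2) A := by
      rw [← Measure.map_apply (hLτ σ q) hA, hperm σ q]
    rw [h2]
    by_cases h : σ⁻¹ q.1 < σ⁻¹ q.2
    · rw [if_pos h]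
    · rw [if_neg h, hsymm (σ⁻¹ q.1) (σ⁻¹ q.2)]
  rw [Finset.sum_congr rfl hterm]
  -- reindex
  have hνA : ∀ q ∈ S, μ (L q ⁻¹' A) * c = ν q A * c := by
    intro q hq
    rw [hν]
    rw [Measure.map_apply (measurable_L q) hA]
  rw [Finset.sum_congr rfl hνA]
  refine Finset.sum_nbij'
    (fun q => if σ⁻¹ q.1 < σ⁻¹ q.2 then (σ⁻¹ q.1, σ⁻¹ q.2) else (σ⁻¹ q.2, σ⁻¹ q.1))
    (fun q => if σ q.1 < σ q.2 then (σ q.1, σ q.2) else (σ q.2, σ q.1))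
    ?_ ?_ ?_ ?_ ?_
  · intro q hq
    have hqlt : q.1 < q.2 := by simpa [hS] using hq
    have hne : σ⁻¹ q.1 ≠ σ⁻¹ q.2 := fun h => absurd (σ⁻¹.injective h ▸ hqlt) (by simp_all)
    by_cases h : σ⁻¹ q.1 < σ⁻¹ q.2
    · simp [hS, show σ.symm q.1 < σ.symm q.2 from h]
    · have : σ⁻¹ q.2 < σ⁻¹ q.1 := lt_of_le_of_ne (not_lt.1 h) (Ne.symm hne)
      simp [hS, show ¬ σ.symm q.1 < σ.symm q.2 from h, show σ.symm q.2 < σ.symm q.1 from this]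
  · intro q hq
    have hqlt : q.1 < q.2 := by simpa [hS] using hq
    have hne : σ q.1 ≠ σ q.2 := fun h => absurd (σ.injective h ▸ hqlt) (by simp_all)
    by_cases h : σ q.1 < σ q.2
    · simp [hS, h]
    · have : σ q.2 < σ q.1 := lt_of_le_of_ne (not_lt.1 h) (Ne.symm hne)
      simp [hS, h, this]
  · intro q hq
    have hqlt : q.1 < q.2 := by simpa [hS] using hq
    by_cases h : σ⁻¹ q.1 < σ⁻¹ q.2
    · simp [show σ.symm q.1 < σ.symm q.2 from h, Equiv.apply_symm_apply, hqlt]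
    · simp [show ¬ σ.symm q.1 < σ.symm q.2 from h, Equiv.apply_symm_apply, hqlt.asymm]
  · intro q hq
    have hqlt : q.1 < q.2 := by simpa [hS] using hq
    by_cases h : σ q.1 < σ q.2
    · simp [h, Equiv.symm_apply_apply, hqlt]
    · simp [h, Equiv.symm_apply_apply, hqlt.asymm]
  · intro q hq
    rfl
end

section
/- Let A be a finite nonempty set, let u : A → ℝ be injective, and let r : A → ℝ, g : A → ℝ, and ĝ : A × A → ℝ be arbitrary functions. For a nonempty subset S ⊆ A, let m(S) denote the unique element of S minimizing u. Then Σ_{∅ ≠ S ⊆ A} ( ∏_{a ∈ S} r(a) ĝ(m(S), a) ) ( ∏_{a ∈ A∖S} (1 − r(a)) g(a) ) = Σ_{a* ∈ A} r(a*) ĝ(a*, a*) ( ∏_{a : u(a) < u(a*)} (1 − r(a)) g(a) ) ( ∏_{a : u(a) > u(a*)} ( (1 − r(a)) g(a) + r(a) ĝ(a*, a) ) ). -/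
open scoped Classical BigOperators

/-- Partitioning on the lowest-level selected individual: for a finite nonempty set `A`
with injective levels `u`, selection weights `r`, and factors `g`, `gHat`, summing over all
nonempty subsets `S ⊆ A` (with `m S` the element of `S` with minimal level) equals the
sum over the choice of the lowest selected individual `a*`. -/
theorem one_for_one_replacement_partition
    {A : Type*} [Fintype A] [Nonempty A]
    (u : A → ℝ) (hu : Function.Injective u)
    (r g : A → ℝ) (gHat : A → A → ℝ)
    (m : Finset A → A)
    (hm : ∀ S : Finset A, S.Nonempty → m S ∈ S ∧ ∀ a ∈ S, u (m S) ≤ u a) :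
    ∑ S ∈ Finset.univ.powerset.filter Finset.Nonempty,
        (∏ a ∈ S, r a * gHat (m S) a) * (∏ a ∈ Finset.univ \ S, (1 - r a) * g a)
      = ∑ aStar : A, r aStar * gHat aStar aStar *
          (∏ a ∈ Finset.univ.filter (fun a => u a < u aStar), (1 - r a) * g a) *
          (∏ a ∈ Finset.univ.filter (fun a => u aStar < u a),
            ((1 - r a) * g a + r a * gHat aStar a)) := by
  classical
  -- characterization of `m`
  have hmchar : ∀ S : Finset A, S.Nonempty → ∀ aStar,
      (m S = aStar ↔ aStar ∈ S ∧ ∀ a ∈ S, u aStar ≤ u a) := by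
    intro S hS aStar
    obtain ⟨hmem, hmin⟩ := hm S hS
    constructor
    · rintro rfl; exact ⟨hmem, hmin⟩
    · rintro ⟨ha, hle⟩
      exact hu (le_antisymm (hmin _ ha) (hle _ hmem))
  rw [← Finset.sum_fiberwise_of_maps_to (g := m) (fun S _ => Finset.mem_univ (m S))
      (fun S => (∏ a ∈ S, r a * gHat (m S) a) * (∏ a ∈ Finset.univ \ S, (1 - r a) * g a))]
  refine Finset.sum_congr rfl (fun aStar _ => ?_)
  set L : Finset A := Finset.univ.filter (fun a => u a < u aStar) with hLdef
  set G : Finset A := Finset.univ.filter (fun a => u aStar < u a) with hGdef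
  -- expand the RHS product over G
  have hexp : ∏ a ∈ G, ((1 - r a) * g a + r a * gHat aStar a)
      = ∑ T ∈ G.powerset, (∏ a ∈ T, r a * gHat aStar a) * ∏ a ∈ G \ T, (1 - r a) * g a := by
    rw [← Finset.prod_add]
    exact Finset.prod_congr rfl (fun a _ => add_comm _ _)
  rw [hexp, Finset.mul_sum]
  refine Finset.sum_nbij' (fun S => S.erase aStar) (fun T => insert aStar T)
    ?_ ?_ ?_ ?_ ?_
  · -- erase maps into powerset of G
    intro S hS
    simp only [Finset.mem_filter, Finset.mem_powerset] at hS ⊢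
    obtain ⟨⟨_, hSne⟩, hmS⟩ := hS
    obtain ⟨haS, hle⟩ := (hmchar S hSne aStar).1 hmS
    intro a ha
    rw [Finset.mem_erase] at ha
    rw [hGdef, Finset.mem_filter]
    refine ⟨Finset.mem_univ _, lt_of_le_of_ne (hle _ ha.2) (fun h => ha.1 (hu h.symm))⟩
  · -- insert maps into the fiber
    intro T hT
    simp only [Finset.mem_powerset] at hT
    have hne : (insert aStar T).Nonempty := Finset.insert_nonempty _ _
    simp only [Finset.mem_filter, Finset.mem_powerset]
    refine ⟨⟨Finset.subset_univ _, hne⟩, (hmchar _ hne aStar).2 ⟨Finset.mem_insert_self _ _, ?_⟩⟩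
    intro a ha
    rcases Finset.mem_insert.1 ha with rfl | ha
    · exact le_refl _
    · exact le_of_lt ((Finset.mem_filter.1 (hT ha)).2)
  · -- left inverse
    intro S hS
    simp only [Finset.mem_filter, Finset.mem_powerset] at hS
    obtain ⟨⟨_, hSne⟩, hmS⟩ := hS
    exact Finset.insert_erase ((hmchar S hSne aStar).1 hmS).1
  · -- right inverse
    intro T hT
    simp only [Finset.mem_powerset] at hT
    have haT : aStar ∉ T := fun h => lt_irrefl (u aStar) (Finset.mem_filter.1 (hT h)).2
    exact Finset.erase_insert haT
  · -- summand equality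
    intro S hS
    simp only [Finset.mem_filter, Finset.mem_powerset] at hS
    obtain ⟨⟨_, hSne⟩, hmS⟩ := hS
    obtain ⟨haS, hle⟩ := (hmchar S hSne aStar).1 hmS
    set T := S.erase aStar with hTdef
    have hTG : T ⊆ G := by
      intro a ha
      rw [hTdef, Finset.mem_erase] at ha
      rw [hGdef, Finset.mem_filter]
      exact ⟨Finset.mem_univ _, lt_of_le_of_ne (hle _ ha.2) (fun h => ha.1 (hu h.symm))⟩
    have hST : S = insert aStar T := (Finset.insert_erase haS).symm
    have haT : aStar ∉ T := Finset.notMem_erase _ _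
    -- complement decomposition
    have hcomp : Finset.univ \ S = L ∪ (G \ T) := by
      ext a
      simp only [Finset.mem_sdiff, Finset.mem_univ, true_and, Finset.mem_union,
        hLdef, hGdef, Finset.mem_filter, hST, Finset.mem_insert, not_or]
      constructor
      · rintro ⟨hne, hnT⟩
        rcases lt_trichotomy (u a) (u aStar) with h | h | h
        · exact Or.inl h
        · exact absurd (hu h) hne
        · exact Or.inr ⟨h, hnT⟩
      · rintro (h | ⟨h, hnT⟩)
        · refine ⟨fun he => absurd (he ▸ h) (lt_irrefl _), fun hT' => ?_⟩
          exact absurd ((Finset.mem_filter.1 (hTG hT')).2.trans h) (lt_irrefl _)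
        · exact ⟨fun he => absurd (he ▸ h) (lt_irrefl _), hnT⟩
    have hdisj : Disjoint L (G \ T) := by
      refine Finset.disjoint_left.2 (fun a ha hb => ?_)
      rw [hLdef, Finset.mem_filter] at ha
      have := (Finset.mem_filter.1 (Finset.mem_sdiff.1 hb).1).2
      exact absurd (ha.2.trans this) (lt_irrefl _)
    rw [hmS, hcomp, Finset.prod_union hdisj, hST, Finset.prod_insert haT]
    ring
end
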